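/- Let O be a nonempty bounded open simply connected subset of ℝ² with connected boundary ∂O. Let A denote the Lebesgue measure (area) of O and L the one-dimensional Hausdorff measure of ∂O, and assume 0 < A and 0 < L < ∞. Then O contains an open ball of radius 2A/(25πL), and O is contained in a closed ball of radius L. In particular the inradius of O is bounded below and the circumradius of O is bounded above by quantities depending only on A and L. -/

import Mathlib

open MeasureTheory Metric Set

/-- A preconnected set containing two points at distance at least `r` has
`μH[1]`-measure at least `r` inside the closed ball of radius `r` around the first point. -/
lemma key_length {X : Type*} [MetricSpace X] [MeasurableSpace X] [BorelSpace X]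
    {s : Set X} (hs : IsPreconnected s) {x y : X} (hx : x ∈ s) (hy : y ∈ s)
    {r : ℝ} (hr : 0 ≤ r) (hrd : r ≤ dist x y) :
    ENNReal.ofReal r ≤ μH[1] (s ∩ Metric.closedBall x r) := by
  set f : X → ℝ := fun z => dist x z with hf
  have hlip : LipschitzWith 1 f := LipschitzWith.dist_right x
  have himg : IsPreconnected (f '' s) := hs.image f hlip.continuous.continuousOn
  have h0 : (0 : ℝ) ∈ f '' s := ⟨x, hx, by simp [hf]⟩
  have hD : dist x y ∈ f '' s := ⟨y, hy, rfl⟩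
  have hIcc : Set.Icc (0 : ℝ) r ⊆ f '' (s ∩ Metric.closedBall x r) := by
    intro t ht
    obtain ⟨z, hz, hzt⟩ := himg.ordConnected.out h0 hD ⟨ht.1, ht.2.trans hrd⟩
    refine ⟨z, ⟨hz, ?_⟩, hzt⟩
    rw [Metric.mem_closedBall, dist_comm]
    rw [show dist x z = t from hzt]; exact ht.2
  calc ENNReal.ofReal r = μH[1] (Set.Icc (0 : ℝ) r) := by
        rw [MeasureTheory.hausdorffMeasure_real, Real.volume_Icc, sub_zero]
    _ ≤ μH[1] (f '' (s ∩ Metric.closedBall x r)) := measure_mono hIcc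
    _ ≤ μH[1] (s ∩ Metric.closedBall x r) := by
        simpa using hlip.hausdorffMeasure_image_le (zero_le_one) (s ∩ Metric.closedBall x r)

/-- A preconnected set meeting both an open set and its complement meets its frontier. -/
lemma cross_frontier {X : Type*} [TopologicalSpace X] {O t : Set X} (hO : IsOpen O)
    (ht : IsPreconnected t) {c p : X} (hc : c ∈ t) (hp : p ∈ t) (hcO : c ∈ O) (hpO : p ∉ O) :
    (t ∩ frontier O).Nonempty := by
  by_contra h
  rw [Set.not_nonempty_iff_eq_empty] at h
  have hsub : t ⊆ O ∪ (closure O)ᶜ := by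
    intro z hz
    by_cases hzO : z ∈ O
    · exact Or.inl hzO
    · refine Or.inr fun hzc => ?_
      have hzf : z ∈ frontier O := ⟨hzc, by rwa [hO.interior_eq]⟩
      have : z ∈ t ∩ frontier O := ⟨hz, hzf⟩
      simp [h] at this
  rcases ht.subset_or_subset hO isClosed_closure.isOpen_compl
      (disjoint_compl_right.mono_left subset_closure) hsub with h1 | h1
  · exact hpO (h1 hp)
  · exact h1 hc (subset_closure hcO)

/-- An obstacle with given area `A` and perimeter `L` contains a ball of radius
`2A/(25πL)` and is contained in a closed ball of radius `L`. -/
theorem inradius_circumradius_bound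
    (O : Set (EuclideanSpace ℝ (Fin 2)))
    (hO : IsOpen O) (hne : O.Nonempty) (hbd : Bornology.IsBounded O)
    (hsc : SimplyConnectedSpace O) (hconn : IsConnected (frontier O))
    (A L : ℝ)
    (hA : A = (volume O).toReal)
    (hL : L = (μH[1] (frontier O)).toReal)
    (hLfin : μH[1] (frontier O) < ⊤)
    (hA0 : 0 < A) (hL0 : 0 < L) :
    (∃ c, Metric.ball c (2 * A / (25 * Real.pi * L)) ⊆ O) ∧
    (∃ c, O ⊆ Metric.closedBall c L) := by
  obtain ⟨x0, hx0⟩ := hconn.nonempty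
  -- diameter bound on the frontier
  have hdiam : ∀ a b, a ∈ frontier O → b ∈ frontier O → dist a b ≤ L := by
    intro a b ha hb
    have h1 : ENNReal.ofReal (dist a b) ≤ μH[1] (frontier O) :=
      (key_length hconn.isPreconnected ha hb dist_nonneg le_rfl).trans
        (measure_mono inter_subset_left)
    have := ENNReal.toReal_mono hLfin.ne h1
    rwa [ENNReal.toReal_ofReal dist_nonneg, ← hL] at this
  -- circumradius bound
  have hcirc : O ⊆ Metric.closedBall x0 L := by
    intro y hy
    have hyx0 : y ≠ x0 := fun h => (hx0.2 (by rwa [hO.interior_eq, ← h])).elim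
    have hd0 : 0 < dist x0 y := dist_pos.mpr (Ne.symm hyx0)
    obtain ⟨R, hR0, hRsub⟩ := hbd.closure.subset_ball_lt 0 x0
    set t : ℝ := R / dist x0 y + 1 with ht
    have ht1 : 1 ≤ t := by
      rw [ht]
      have : 0 ≤ R / dist x0 y := by positivity
      linarith
    set w : EuclideanSpace ℝ (Fin 2) := x0 + t • (y - x0) with hw
    have hdistw : dist x0 w = t * dist x0 y := by
      rw [dist_eq_norm, hw]
      have : x0 - (x0 + t • (y - x0)) = (-t) • (y - x0) := by module
      rw [this, norm_smul, dist_eq_norm, norm_sub_rev x0 y, Real.norm_eq_abs, abs_neg,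
        abs_of_nonneg (by linarith : (0:ℝ) ≤ t)]
    have hwO : w ∉ O := by
      intro hwmem
      have := hRsub (subset_closure hwmem)
      rw [Metric.mem_ball, dist_comm] at this
      rw [hdistw, ht] at this
      have : (R / dist x0 y + 1) * dist x0 y < R := this
      rw [add_mul, div_mul_cancel₀ _ hd0.ne', one_mul] at this
      linarith
    obtain ⟨f, hfseg, hfF⟩ := cross_frontier hO (convex_segment y w).isPreconnected
        (left_mem_segment ℝ y w) (right_mem_segment ℝ y w) hy hwO
    have hdf : dist x0 y ≤ dist x0 f := by
      rw [segment_eq_image'] at hfseg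
      obtain ⟨u, hu, hfu⟩ := hfseg
      have hfx0 : f - x0 = (1 + u * (t - 1)) • (y - x0) := by
        rw [← hfu, hw]; module
      have h1u : (1:ℝ) ≤ 1 + u * (t - 1) := by nlinarith [hu.1, hu.2]
      have : dist x0 f = (1 + u * (t - 1)) * dist x0 y := by
        rw [dist_comm x0 f, dist_eq_norm, hfx0, norm_smul, dist_eq_norm, norm_sub_rev x0 y,
          Real.norm_eq_abs, abs_of_nonneg (by linarith : (0:ℝ) ≤ 1 + u * (t - 1))]
      rw [this]
      nlinarith
    have := hdiam x0 f hx0 hfF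
    rw [Metric.mem_closedBall, dist_comm]
    linarith
  -- area bound from circumradius
  have hπ := Real.pi_pos
  have hApi : A ≤ L ^ 2 * Real.pi := by
    have h1 : volume O ≤ volume (Metric.closedBall x0 L) := measure_mono hcirc
    rw [EuclideanSpace.volume_closedBall] at h1
    have h3 : (ENNReal.ofReal L) ^ Fintype.card (Fin 2) *
        ENNReal.ofReal (Real.sqrt Real.pi ^ Fintype.card (Fin 2) /
          Real.Gamma (Fintype.card (Fin 2) / 2 + 1)) = ENNReal.ofReal (L ^ 2 * Real.pi) := by
      have hcard : (Fintype.card (Fin 2)) = 2 := by simp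
      rw [hcard]
      norm_num
      rw [← ENNReal.ofReal_pow (Real.sqrt_nonneg _), Real.sq_sqrt hπ.le, ← ENNReal.ofReal_pow hL0.le,
        ← ENNReal.ofReal_mul (by positivity)]
    rw [h3] at h1
    have := ENNReal.toReal_mono ENNReal.ofReal_ne_top h1
    rwa [ENNReal.toReal_ofReal (by positivity), ← hA] at this
  obtain ⟨r, hrdef⟩ : ∃ r : ℝ, r = 2 * A / (25 * Real.pi * L) := ⟨_, rfl⟩
  have hr0 : 0 < r := by rw [hrdef]; positivity
  have h25 : r * (25 * Real.pi * L) = 2 * A := by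
    rw [hrdef]; field_simp
  rw [← hrdef]
  clear hrdef
  have hrL : r ≤ 3 * L := by nlinarith [mul_pos hπ hL0]
  refine ⟨?_, ⟨x0, hcirc⟩⟩
  -- inradius part, by contradiction
  by_contra hcon
  push_neg at hcon
  have hnear : ∀ c ∈ O, ∃ f ∈ frontier O, dist c f < r := by
    intro c hc
    obtain ⟨p, hp, hpO⟩ : ∃ p ∈ Metric.ball c r, p ∉ O := by
      by_contra h; push_neg at h; exact hcon c h
    obtain ⟨f, hfseg, hfF⟩ := cross_frontier hO (convex_segment c p).isPreconnected
        (left_mem_segment ℝ c p) (right_mem_segment ℝ c p) hc hpO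
    refine ⟨f, hfF, ?_⟩
    have := (convex_ball c r).segment_subset (Metric.mem_ball_self hr0) hp hfseg
    rwa [Metric.mem_ball, dist_comm] at this
  classical
  set P : ℕ → Prop := fun n => ∃ s : Finset (EuclideanSpace ℝ (Fin 2)),
    ↑s ⊆ frontier O ∧ s.card = n ∧
    (s : Set (EuclideanSpace ℝ (Fin 2))).Pairwise fun a b => r ≤ dist a b with hP
  have hPbound : ∀ n, P n → 2 ≤ n → (n : ℝ) * (r / 3) ≤ L := by
    rintro n ⟨s, hsF, hcard, hsep⟩ h2n
    have hdisj : (↑s : Set (EuclideanSpace ℝ (Fin 2))).PairwiseDisjoint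
        fun x => frontier O ∩ Metric.closedBall x (r / 3) := by
      intro a ha b hb hab
      refine Set.disjoint_left.mpr fun z hza hzb => ?_
      have h1 : r ≤ dist a b := hsep ha hb hab
      have h2 := hza.2
      have h3 := hzb.2
      rw [Metric.mem_closedBall] at h2 h3
      have h4 := dist_triangle a z b
      rw [dist_comm] at h2
      linarith
    have hsum := measure_biUnion_finset hdisj
      (fun x _ => isClosed_frontier.measurableSet.inter measurableSet_closedBall)
      (μ := μH[1])
    have hle : ∀ x ∈ s, ENNReal.ofReal (r / 3) ≤
        μH[1] (frontier O ∩ Metric.closedBall x (r / 3)) := by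
      intro x hx
      have h1c : 1 < s.card := by omega
      obtain ⟨y, hy, hyx⟩ := Finset.exists_mem_ne h1c x
      have hd : r ≤ dist x y := hsep hx hy hyx.symm
      exact key_length hconn.isPreconnected (hsF hx) (hsF hy) (by positivity)
        (by linarith)
    have hchain : ENNReal.ofReal ((n : ℝ) * (r / 3)) ≤ ENNReal.ofReal L := by
      calc ENNReal.ofReal ((n : ℝ) * (r / 3))
          = (n : ENNReal) * ENNReal.ofReal (r / 3) := by
            rw [ENNReal.ofReal_mul (by positivity), ENNReal.ofReal_natCast]
        _ = ∑ _x ∈ s, ENNReal.ofReal (r / 3) := by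
            rw [Finset.sum_const, hcard, nsmul_eq_mul]
        _ ≤ ∑ x ∈ s, μH[1] (frontier O ∩ Metric.closedBall x (r / 3)) :=
            Finset.sum_le_sum hle
        _ = μH[1] (⋃ x ∈ s, frontier O ∩ Metric.closedBall x (r / 3)) := hsum.symm
        _ ≤ μH[1] (frontier O) := measure_mono (by
            simp only [Set.iUnion_subset_iff]
            exact fun x _ => inter_subset_left)
        _ = ENNReal.ofReal L := by rw [hL, ENNReal.ofReal_toReal hLfin.ne]
    have := ENNReal.toReal_mono ENNReal.ofReal_ne_top hchain
    rwa [ENNReal.toReal_ofReal (by positivity), ENNReal.toReal_ofReal hL0.le] at this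
  have hB1 : 1 ≤ Nat.floor (3 * L / r) := by
    apply Nat.le_floor
    rw [Nat.cast_one, le_div_iff₀ hr0]
    linarith
  have hPB : ∀ n, P n → n ≤ Nat.floor (3 * L / r) := by
    intro n hn
    rcases le_or_gt n 1 with h | h
    · omega
    · have hb := hPbound n hn h
      apply Nat.le_floor
      rw [le_div_iff₀ hr0]
      linarith
  have hP1 : P 1 := by
    refine ⟨{x0}, by simp [hx0], Finset.card_singleton x0, by simp⟩
  set N : ℕ := Nat.findGreatest P (Nat.floor (3 * L / r)) with hN
  have hN1 : 1 ≤ N := Nat.le_findGreatest hB1 hP1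
  have hPN : P N := Nat.findGreatest_of_ne_zero hN.symm (by omega)
  obtain ⟨s, hsF, hcard, hsep⟩ := hPN
  have hcover : ∀ f ∈ frontier O, ∃ x ∈ s, dist f x < r := by
    intro f hf
    by_contra h
    push_neg at h
    have hfs : f ∉ s := fun hfs => by
      have := h f hfs; simp at this; linarith
    have hP' : P (N + 1) := by
      refine ⟨insert f s, ?_, by rw [Finset.card_insert_of_notMem hfs, hcard], ?_⟩
      · intro z hz
        rcases Finset.mem_insert.mp (by exact_mod_cast hz) with h' | h'
        · rw [h']; exact hf
        · exact hsF h'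
      · rw [Finset.coe_insert]
        exact hsep.insert
          (fun b hb _ => ⟨h b hb, by rw [dist_comm]; exact h b hb⟩)
    exact Nat.findGreatest_is_greatest (by omega) (hPB _ hP') hP'
  have hOcover : O ⊆ ⋃ x ∈ s, Metric.ball x (2 * r) := by
    intro c hc
    obtain ⟨f, hf, hcf⟩ := hnear c hc
    obtain ⟨x, hx, hfx⟩ := hcover f hf
    refine Set.mem_biUnion hx ?_
    rw [Metric.mem_ball]
    have := dist_triangle c f x
    linarith
  have hball : ∀ x : EuclideanSpace ℝ (Fin 2),
      volume (Metric.ball x (2 * r)) = ENNReal.ofReal ((2 * r) ^ 2 * Real.pi) := by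
    intro x
    rw [EuclideanSpace.volume_ball]
    have hcard2 : (Fintype.card (Fin 2)) = 2 := by simp
    rw [hcard2]
    norm_num
    rw [← ENNReal.ofReal_pow (Real.sqrt_nonneg _), Real.sq_sqrt hπ.le,
      show (2 : ENNReal) = ENNReal.ofReal 2 by simp, ← ENNReal.ofReal_mul (by norm_num),
      ← ENNReal.ofReal_pow (by positivity),
      ← ENNReal.ofReal_mul (by positivity)]
  have hvol : volume O ≤ ENNReal.ofReal ((N : ℝ) * ((2 * r) ^ 2 * Real.pi)) := by
    calc volume O ≤ volume (⋃ x ∈ s, Metric.ball x (2 * r)) := measure_mono hOcover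
      _ ≤ ∑ x ∈ s, volume (Metric.ball x (2 * r)) := measure_biUnion_finset_le s _
      _ = (N : ENNReal) * ENNReal.ofReal ((2 * r) ^ 2 * Real.pi) := by
          simp only [hball, Finset.sum_const, hcard, nsmul_eq_mul]
      _ = ENNReal.ofReal ((N : ℝ) * ((2 * r) ^ 2 * Real.pi)) := by
          rw [ENNReal.ofReal_mul (by positivity : (0:ℝ) ≤ (N : ℝ)), ENNReal.ofReal_natCast]
  have hAvol : A ≤ (N : ℝ) * ((2 * r) ^ 2 * Real.pi) := by
    have := ENNReal.toReal_mono ENNReal.ofReal_ne_top hvol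
    rwa [ENNReal.toReal_ofReal (by positivity), ← hA] at this
  have hNL : (N : ℝ) * (r / 3) ≤ L := by
    rcases eq_or_lt_of_le hN1 with h | h
    · rw [← h]; push_cast; linarith
    · exact hPbound N ⟨s, hsF, hcard, hsep⟩ (by omega)
  have h12 : 12 * Real.pi * r * ((N : ℝ) * (r / 3)) ≤ 12 * Real.pi * r * L :=
    mul_le_mul_of_nonneg_left hNL (by positivity)
  have hfin : A ≤ 12 * Real.pi * r * L := by nlinarith [hAvol, h12]
  nlinarith [hfin, h25, hA0]
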